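/- For each k ≥ 1, define trees A_k and E_k recursively: A₁ is a single node; E₁ is a root with infinitely many leaf successors; A_{k+1} is a root with infinitely many copies of E_k attached above; E_{k+1} is a root with infinitely many copies of A_k and infinitely many copies of E_k attached above. Then for every k, A_k and E_k are non-isomorphic trees of height at most k, and there is a first-order formula φ_k(x) in the language of leveled trees such that the root of E_k satisfies φ_k and the root of A_k satisfies ¬φ_k. -/

import Mathlib

open FirstOrder Language

def L0 : FirstOrder.Language where
  Functions := fun _ => Empty
  Relations := fun n => match n with
    | 1 => ℕ
    | 2 => ℕ
    | _ => Empty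

def pRel (i : ℕ) : L0.Relations 1 := i

def ltRel (i : ℕ) : L0.Relations 2 := i

def L0Str {M : Type*} (P : ℕ → M → Prop) (lt : ℕ → M → M → Prop) : L0.Structure M where
  funMap := fun {n} f _ => Empty.elim f
  RelMap := fun {n} => match n with
    | 0 => fun r _ => Empty.elim r
    | 1 => fun i v => P i (v 0)
    | 2 => fun i v => lt i (v 0) (v 1)
    | (_ + 3) => fun r _ => Empty.elim r

/-- `x` satisfies the predicate `Pᵢ`. -/
def pOn {M : Type*} [L0.Structure M] (i : ℕ) (x : M) : Prop :=
  Structure.RelMap (pRel i) ![x]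

/-- `x <ᵢ y`. -/
def ltOn {M : Type*} [L0.Structure M] (i : ℕ) (x y : M) : Prop :=
  Structure.RelMap (ltRel i) ![x, y]

/-- The formula `Pᵢ t`. -/
def pFml {n : ℕ} (i : ℕ) (t : L0.Term (Empty ⊕ Fin n)) : L0.BoundedFormula Empty n :=
  (pRel i).boundedFormula₁ t

/-- The formula `t₁ <ᵢ t₂`. -/
def ltFml {n : ℕ} (i : ℕ) (t₁ t₂ : L0.Term (Empty ⊕ Fin n)) : L0.BoundedFormula Empty n :=
  (ltRel i).boundedFormula₂ t₁ t₂

/-- `Pᵢ` and `Pⱼ` are disjoint. -/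
def axDisj (i j : ℕ) : L0.Sentence := ∀' ((pFml i &0 ⊓ pFml j &0).not)

/-- `<ᵢ ⊆ Pᵢ × Pᵢ₊₁`. -/
def axDom (i : ℕ) : L0.Sentence := ∀' ∀' ((ltFml i &0 &1).imp (pFml i &0 ⊓ pFml (i + 1) &1))

/-- Existence of predecessors. -/
def axEx (i : ℕ) : L0.Sentence := ∀' ((pFml (i + 1) &0).imp (∃' (pFml i &1 ⊓ ltFml i &1 &0)))

/-- Uniqueness of predecessors. -/
def axUniq (i : ℕ) : L0.Sentence :=
  ∀' ∀' ∀' (((ltFml i &0 &2) ⊓ (ltFml i &1 &2)).imp (Term.bdEqual &0 &1))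

/-- The base theory `T₀` of leveled forests. -/
def T0 : L0.Theory :=
  {φ | (∃ i j, i ≠ j ∧ φ = axDisj i j) ∨ (∃ i, φ = axDom i) ∨
    (∃ i, φ = axEx i) ∨ (∃ i, φ = axUniq i)}

/-- A bare `L₀`-structure: a carrier with unary predicates `Pᵢ` and binary relations `<ᵢ`. -/
structure PStr where
  α : Type
  P : ℕ → α → Prop
  lt : ℕ → α → α → Prop

/-- The `L₀`-structure associated to a `PStr`. -/
def PStr.toL0 (S : PStr) : L0.Structure S.α :=
  L0Str S.P S.lt

/-- The element `x` satisfies the `L₀`-formula `φ` (in one free variable) in `S`. -/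
def PRealize (S : PStr) (φ : L0.Formula Unit) (x : S.α) : Prop :=
  @FirstOrder.Language.Formula.Realize L0 S.α S.toL0 Unit φ (fun _ => x)

/-- `S` satisfies the leveled-forest theory `T₀` (semantically). -/
def PStr.IsT0 (S : PStr) : Prop :=
  (∀ i j, i ≠ j → ∀ x, S.P i x → ¬S.P j x) ∧
  (∀ i x y, S.lt i x y → S.P i x ∧ S.P (i + 1) y) ∧
  (∀ i y, S.P (i + 1) y → ∃ x, S.lt i x y) ∧
  (∀ i x x' y, S.lt i x y → S.lt i x' y → x = x')

/-- An isomorphism of `L₀`-structures. -/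
structure PStrIso (S T : PStr) where
  toEquiv : S.α ≃ T.α
  map_P : ∀ i x, S.P i x ↔ T.P i (toEquiv x)
  map_lt : ∀ i x y, S.lt i x y ↔ T.lt i (toEquiv x) (toEquiv y)

/-- The single-node tree (one root at level `0`). -/
def onePt : PStr where
  α := PUnit
  P := fun i _ => i = 0
  lt := fun _ _ _ => False

/-- A new root with countably many copies of `S` attached above (all levels of `S` shifted up by
one, roots of the copies linked to the new root by `<₀`). -/
def PStr.attach (S : PStr) : PStr where
  α := Option (ℕ × S.α)
  P := fun i x => match i, x with
    | 0, none => True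
    | 0, some _ => False
    | _ + 1, none => False
    | i + 1, some p => S.P i p.2
  lt := fun i x y => match i, x, y with
    | 0, none, some p => S.P 0 p.2
    | 0, _, _ => False
    | _ + 1, none, _ => False
    | _ + 1, _, none => False
    | i + 1, some p, some q => p.1 = q.1 ∧ S.lt i p.2 q.2

/-- The disjoint union of two `L₀`-structures. -/
def PStr.sum (S T : PStr) : PStr where
  α := S.α ⊕ T.α
  P := fun i x => x.elim (S.P i) (T.P i)
  lt := fun i x y => match x, y with
    | .inl a, .inl b => S.lt i a b
    | .inr a, .inr b => T.lt i a b
    | _, _ => False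

/-- `AEtree k = (A_{k+1}, E_{k+1})`: `A₁` is a single node, `E₁` is a root with infinitely many
leaf successors, `A_{k+2}` is a root with infinitely many copies of `E_{k+1}` above, and
`E_{k+2}` is a root with infinitely many copies of `A_{k+1}` and infinitely many copies of
`E_{k+1}` above. -/
def AEtree : ℕ → PStr × PStr
  | 0 => (onePt, onePt.attach)
  | k + 1 => ((AEtree k).2.attach, (PStr.sum (AEtree k).1 (AEtree k).2).attach)

/-- The tree `A_k` (for `k ≥ 1`). -/
def Atree (k : ℕ) : PStr := (AEtree (k - 1)).1

/-- The tree `E_k` (for `k ≥ 1`). -/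
def Etree (k : ℕ) : PStr := (AEtree (k - 1)).2

attribute [local instance] PStr.toL0

/-- `ψ_k` at level `ℓ` (indexing: `psi 0 = ψ₁`). -/
def psi : ℕ → ℕ → L0.BoundedFormula Empty 1
  | 0, l => ∃' (ltFml l &0 &1)
  | k + 1, l => ∃' ((ltFml l &0 &1) ⊓ (((psi k (l + 1)).liftAt 1 0).not))

/-- Semantic satisfaction of `ψ_k` at level `ℓ`. -/
def PSat (S : PStr) (k l : ℕ) (x : S.α) : Prop :=
  (psi k l).Realize (fun e : Empty => e.elim) ![x]

lemma psat_zero (S : PStr) (l : ℕ) (x : S.α) :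
    PSat S 0 l x ↔ ∃ y, S.lt l x y := by
  simp only [PSat, psi, ltFml, BoundedFormula.realize_ex]
  constructor
  · rintro ⟨y, hy⟩
    refine ⟨y, ?_⟩
    exact hy
  · rintro ⟨y, hy⟩
    refine ⟨y, ?_⟩
    exact hy

lemma psat_succ (S : PStr) (k l : ℕ) (x : S.α) :
    PSat S (k + 1) l x ↔ ∃ y, S.lt l x y ∧ ¬ PSat S k (l + 1) y := by
  simp only [PSat, psi, BoundedFormula.realize_ex, BoundedFormula.realize_inf,
    BoundedFormula.realize_not]
  constructor
  · rintro ⟨y, h1, h2⟩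
    refine ⟨y, ?_, ?_⟩
    · exact h1
    · intro h; apply h2
      rw [BoundedFormula.realize_liftAt_one (by norm_num : 0 ≤ 1)]
      convert h using 2
      funext i
      fin_cases i
      simp [Fin.snoc]
  · rintro ⟨y, h1, h2⟩
    refine ⟨y, ?_, ?_⟩
    · exact h1
    · intro h; apply h2
      rw [BoundedFormula.realize_liftAt_one (by norm_num : 0 ≤ 1)] at h
      convert h using 2
      funext i
      fin_cases i
      simp [Fin.snoc]

lemma psat_iso {S T : PStr} (f : PStrIso S T) :
    ∀ (k l : ℕ) (x : S.α), PSat S k l x ↔ PSat T k l (f.toEquiv x) := by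
  intro k
  induction k with
  | zero =>
    intro l x
    rw [psat_zero, psat_zero]
    constructor
    · rintro ⟨y, hy⟩; exact ⟨f.toEquiv y, (f.map_lt l x y).1 hy⟩
    · rintro ⟨y, hy⟩
      refine ⟨f.toEquiv.symm y, (f.map_lt l x _).2 ?_⟩
      simpa using hy
  | succ k ih =>
    intro l x
    rw [psat_succ, psat_succ]
    constructor
    · rintro ⟨y, hy, hn⟩
      exact ⟨f.toEquiv y, (f.map_lt l x y).1 hy, fun h => hn ((ih (l+1) y).2 h)⟩
    · rintro ⟨y, hy, hn⟩
      refine ⟨f.toEquiv.symm y, (f.map_lt l x _).2 (by simpa using hy), fun h => hn ?_⟩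
      have := (ih (l+1) (f.toEquiv.symm y)).1 h
      simpa using this
  
lemma psat_attach (S : PStr) :
    ∀ (k l n : ℕ) (x : S.α), PSat S.attach k (l + 1) (some (n, x)) ↔ PSat S k l x := by
  intro k
  induction k with
  | zero =>
    intro l n x
    erw [psat_zero, psat_zero]
    constructor
    · rintro ⟨y, hy⟩
      match y, hy with
      | some q, ⟨_, hq⟩ => exact ⟨q.2, hq⟩
    · rintro ⟨y, hy⟩
      exact ⟨some (n, y), rfl, hy⟩
  | succ k ih =>
    intro l n x
    erw [psat_succ, psat_succ]
    constructor
    · rintro ⟨y, hy, hn⟩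
      match y, hy with
      | some q, ⟨he, hq⟩ =>
        refine ⟨q.2, hq, fun h => hn ?_⟩
        have : q = (q.1, q.2) := rfl
        rw [show (some q : Option (ℕ × S.α)) = some (q.1, q.2) from rfl]
        exact (ih (l+1) q.1 q.2).2 h
    · rintro ⟨y, hy, hn⟩
      exact ⟨some (n, y), ⟨rfl, hy⟩, fun h => hn ((ih (l+1) n y).1 h)⟩

lemma psat_sum_inl (S T : PStr) :
    ∀ (k l : ℕ) (x : S.α), PSat (S.sum T) k l (Sum.inl x) ↔ PSat S k l x := by
  intro k
  induction k with
  | zero =>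
    intro l x
    erw [psat_zero, psat_zero]
    constructor
    · rintro ⟨y, hy⟩
      match y, hy with
      | .inl b, hb => exact ⟨b, hb⟩
    · rintro ⟨y, hy⟩; exact ⟨.inl y, hy⟩
  | succ k ih =>
    intro l x
    erw [psat_succ, psat_succ]
    constructor
    · rintro ⟨y, hy, hn⟩
      match y, hy with
      | .inl b, hb => exact ⟨b, hb, fun h => hn ((ih (l+1) b).2 h)⟩
    · rintro ⟨y, hy, hn⟩
      exact ⟨.inl y, hy, fun h => hn ((ih (l+1) y).1 h)⟩

lemma onePt_isT0 : onePt.IsT0 := by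
  refine ⟨?_, ?_, ?_, ?_⟩
  · intro i j hij x hx hx'
    exact hij ((hx : i = 0).trans (hx' : j = 0).symm)
  · intro i x y h; exact h.elim
  · intro i y hy; exact absurd hy (by simp [onePt])
  · intro i x x' y h; exact h.elim

lemma attach_isT0 {S : PStr} (h : S.IsT0) : S.attach.IsT0 := by
  obtain ⟨hdisj, hdom, hex, huniq⟩ := h
  refine ⟨?_, ?_, ?_, ?_⟩
  · intro i j hij x hx hx'
    cases x with
    | none =>
      cases i with
      | zero =>
        cases j with
        | zero => exact hij rfl
        | succ j => exact hx'
      | succ i => exact hx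
    | some p =>
      cases i with
      | zero => exact hx
      | succ i =>
        cases j with
        | zero => exact hx'
        | succ j => exact hdisj i j (by omega) p.2 hx hx'
  · intro i x y h
    match i, x, y, h with
    | 0, none, some p, h => exact ⟨trivial, h⟩
    | i+1, some p, some q, h => exact ⟨(hdom i _ _ h.2).1, (hdom i _ _ h.2).2⟩
  · intro i y hy
    match i, y, hy with
    | 0, some p, hy => exact ⟨none, hy⟩
    | i+1, some q, hy =>
      obtain ⟨x, hx⟩ := hex i _ hy
      exact ⟨some (q.1, x), rfl, hx⟩
  · intro i x x' y h h'
    match i, x, x', y, h, h' with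
    | 0, none, none, some p, h, h' => rfl
    | i+1, some (n, a), some (n', a'), some (m, b), h, h' =>
      have h1 : a = a' := huniq i a a' b h.2 h'.2
      have h2 : n = m := h.1
      have h3 : n' = m := h'.1
      subst h1; subst h2; subst h3; rfl

lemma sum_isT0 {S T : PStr} (hS : S.IsT0) (hT : T.IsT0) : (S.sum T).IsT0 := by
  obtain ⟨hd1, hd2, hd3, hd4⟩ := hS
  obtain ⟨he1, he2, he3, he4⟩ := hT
  refine ⟨?_, ?_, ?_, ?_⟩
  · rintro i j hij (a | a) ha ha'
    · exact hd1 i j hij a ha ha'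
    · exact he1 i j hij a ha ha'
  · intro i x y h
    match x, y, h with
    | .inl a, .inl b, h => exact ⟨(hd2 i a b h).1, (hd2 i a b h).2⟩
    | .inr a, .inr b, h => exact ⟨(he2 i a b h).1, (he2 i a b h).2⟩
  · rintro i (y | y) hy
    · obtain ⟨x, hx⟩ := hd3 i y hy; exact ⟨.inl x, hx⟩
    · obtain ⟨x, hx⟩ := he3 i y hy; exact ⟨.inr x, hx⟩
  · intro i x x' y h h'
    match x, x', y, h, h' with
    | .inl a, .inl b, .inl c, h, h' => exact congrArg _ (hd4 i a b c h h')
    | .inr a, .inr b, .inr c, h, h' => exact congrArg _ (he4 i a b c h h')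

lemma attach_P0 {S : PStr} (x : S.attach.α) : S.attach.P 0 x ↔ x = none := by
  match x with
  | none => simp [PStr.attach]
  | some p => simp [PStr.attach]

/-- The main induction. -/
lemma main_ind (m : ℕ) :
    (AEtree m).1.IsT0 ∧ (AEtree m).2.IsT0 ∧
    (∃ r, (AEtree m).1.P 0 r) ∧
    (∀ r, (AEtree m).1.P 0 r → ¬ PSat (AEtree m).1 m 0 r) ∧
    (∀ r, (AEtree m).2.P 0 r → PSat (AEtree m).2 m 0 r) ∧
    (∀ x, ∃ i ≤ m + 1, (AEtree m).1.P i x) ∧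
    (∀ x, ∃ i ≤ m + 1, (AEtree m).2.P i x) := by
  induction m with
  | zero =>
    refine ⟨onePt_isT0, attach_isT0 onePt_isT0, ⟨PUnit.unit, rfl⟩, ?_, ?_, ?_, ?_⟩
    · intro r _ h
      rw [psat_zero] at h
      obtain ⟨y, hy⟩ := h
      exact hy
    · intro r hr
      have hr' : r = none := (attach_P0 (S := onePt) r).1 hr
      subst hr'
      erw [psat_zero]
      exact ⟨some (0, PUnit.unit), rfl⟩
    · intro x; exact ⟨0, by omega, rfl⟩
    · rintro (_ | ⟨n, x⟩)
      · exact ⟨0, by omega, trivial⟩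
      · exact ⟨1, by omega, rfl⟩
  | succ m ih =>
    obtain ⟨hA, hE, ⟨rA, hrA⟩, hAn, hEy, hAh, hEh⟩ := ih
    refine ⟨attach_isT0 hE, attach_isT0 (sum_isT0 hA hE), ⟨none, trivial⟩, ?_, ?_, ?_, ?_⟩
    · intro r hr h
      have hr' : r = none := (attach_P0 (S := (AEtree m).2) r).1 hr
      subst hr'
      erw [psat_succ] at h
      obtain ⟨y, hy, hn⟩ := h
      match y, hy with
      | some p, hp =>
        exact hn ((psat_attach (AEtree m).2 m 0 p.1 p.2).2 (hEy p.2 hp))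
    · intro r hr
      have hr' : r = none := (attach_P0 (S := (AEtree m).1.sum (AEtree m).2) r).1 hr
      subst hr'
      erw [psat_succ]
      refine ⟨some (0, .inl rA), hrA, fun h => ?_⟩
      exact hAn rA hrA
        ((psat_sum_inl (AEtree m).1 (AEtree m).2 m 0 rA).1
          ((psat_attach ((AEtree m).1.sum (AEtree m).2) m 0 0 (Sum.inl rA)).1 h))
    · rintro (_ | ⟨n, x⟩)
      · exact ⟨0, by omega, trivial⟩
      · obtain ⟨i, hi, hx⟩ := hEh x
        exact ⟨i + 1, by omega, hx⟩
    · rintro (_ | ⟨n, x⟩)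
      · exact ⟨0, by omega, trivial⟩
      · cases x with
        | inl a => obtain ⟨i, hi, hx⟩ := hAh a; exact ⟨i + 1, by omega, hx⟩
        | inr a => obtain ⟨i, hi, hx⟩ := hEh a; exact ⟨i + 1, by omega, hx⟩

lemma prealize_psi (S : PStr) (k : ℕ) (x : S.α) :
    PRealize S ((psi k 0).toFormula.relabel (fun _ => ())) x ↔ PSat S k 0 x := by
  unfold PRealize PSat
  rw [Formula.realize_relabel, BoundedFormula.realize_toFormula]
  apply iff_of_eq
  congr 1
  · funext e; exact e.elim
  · funext i
    fin_cases i
    rfl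

lemma Aroot_unique (m : ℕ) : ∃! r, (AEtree m).1.P 0 r := by
  cases m with
  | zero => exact ⟨PUnit.unit, rfl, fun y _ => rfl⟩
  | succ m => exact ⟨none, trivial, fun y hy => (attach_P0 (S := (AEtree m).2) y).1 hy⟩

lemma Eroot_unique (m : ℕ) : ∃! r, (AEtree m).2.P 0 r := by
  cases m with
  | zero => exact ⟨none, trivial, fun y hy => (attach_P0 (S := onePt) y).1 hy⟩
  | succ m =>
    exact ⟨none, trivial, fun y hy =>
      (attach_P0 (S := (AEtree m).1.sum (AEtree m).2) y).1 hy⟩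

/-- for every `k ≥ 1`, `A_k` and `E_k` are non-isomorphic trees (single-rooted
models of `T₀` with every node at some level) of height at most `k`, and there is a first-order
formula `φ_k(x)` in the language of leveled trees satisfied by the root of `E_k` but not by the
root of `A_k`. -/
theorem back_and_forth_trees (k : ℕ) (hk : 1 ≤ k) :
    (Atree k).IsT0 ∧ (Etree k).IsT0 ∧
    (∃! r, (Atree k).P 0 r) ∧ (∃! r, (Etree k).P 0 r) ∧
    (∀ x : (Atree k).α, ∃ i ≤ k, (Atree k).P i x) ∧
    (∀ x : (Etree k).α, ∃ i ≤ k, (Etree k).P i x) ∧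
    IsEmpty (PStrIso (Atree k) (Etree k)) ∧
    (∃ φ : L0.Formula Unit,
      (∀ r, (Etree k).P 0 r → PRealize (Etree k) φ r) ∧
      (∀ r, (Atree k).P 0 r → ¬PRealize (Atree k) φ r)) := by
  obtain ⟨m, rfl⟩ : ∃ m, k = m + 1 := ⟨k - 1, by omega⟩
  obtain ⟨hA, hE, ⟨rA, hrA⟩, hAn, hEy, hAh, hEh⟩ := main_ind m
  refine ⟨hA, hE, Aroot_unique m, Eroot_unique m, hAh, hEh, ⟨fun f => ?_⟩, ?_⟩
  · have h1 : (AEtree m).2.P 0 (f.toEquiv rA) := (f.map_P 0 rA).1 hrA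
    exact hAn rA hrA ((psat_iso f m 0 rA).2 (hEy _ h1))
  · refine ⟨(psi m 0).toFormula.relabel (fun _ => ()), ?_, ?_⟩
    · intro r hr
      exact (prealize_psi (AEtree m).2 m r).2 (hEy r hr)
    · intro r hr h
      exact hAn r hr ((prealize_psi (AEtree m).1 m r).1 h)
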